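/- arXiv:2411.01509 — 2 statements merged into one kernel-verified Lean document; each statement's English description precedes it below -/
import Mathlib

section
/- Let f, g, h be non-constant meromorphic functions on ℂ satisfying f^n + g^m + h^k = 1 with min{n, m, k} ≥ 6 and with f^n, g^m, h^k linearly independent over ℂ, let D = W(f^n, g^m, h^k) be their Wronskian, and let z₀ ∈ ℂ be a zero or pole of at least one of f, g, h, with p, q, t the orders of f, g, h at z₀. If max{p, q, t} = 0 and min{p, q, t} < 0, then A(z₀) ≤ 0. -/
/-- The order of a meromorphic function at a point: the exponent of the leading term of
the Laurent expansion (negative at a pole, positive at a zero, `0` otherwise; by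
convention `0` if the function is not meromorphic at the point or vanishes identically
near it). -/
noncomputable def meroOrd (f : ℂ → ℂ) (z : ℂ) : ℤ :=
  open Classical in
  if h : MeromorphicAt f z then WithTop.untopD 0 (meromorphicOrderAt f z) else 0

/-- The pole multiplicity `U(F, z₀) = max (−ord(F, z₀), 0)`. -/
noncomputable def poleMult (f : ℂ → ℂ) (z : ℂ) : ℕ := (-(meroOrd f z)).toNat

/-- The zero multiplicity `U(1/F, z₀) = max (ord(F, z₀), 0)`. -/
noncomputable def zeroMult (f : ℂ → ℂ) (z : ℂ) : ℕ := (meroOrd f z).toNat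

/-- The Wronskian `W(F₁, F₂, F₃)`: the determinant of the 3×3 matrix whose rows are
the functions, their first derivatives and their second derivatives. -/
noncomputable def wronskian3 (F₁ F₂ F₃ : ℂ → ℂ) (z : ℂ) : ℂ :=
  Matrix.det !![F₁ z, F₂ z, F₃ z;
                deriv F₁ z, deriv F₂ z, deriv F₃ z;
                deriv (deriv F₁) z, deriv (deriv F₂) z, deriv (deriv F₃) z]

/-- The quantity
`A(z₀) = 3(U(1/F₁) + U(1/F₂) + U(1/F₃)) + 3U(D) − 3U(1/D) − 2(U(F₁) + U(F₂) + U(F₃))`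
at `z₀`, where `D = W(F₁, F₂, F₃)`. -/
noncomputable def nevanA (F₁ F₂ F₃ : ℂ → ℂ) (z : ℂ) : ℤ :=
  3 * ((zeroMult F₁ z : ℤ) + (zeroMult F₂ z : ℤ) + (zeroMult F₃ z : ℤ))
    + 3 * (poleMult (wronskian3 F₁ F₂ F₃) z : ℤ)
    - 3 * (zeroMult (wronskian3 F₁ F₂ F₃) z : ℤ)
    - 2 * ((poleMult F₁ z : ℤ) + (poleMult F₂ z : ℤ) + (poleMult F₃ z : ℤ))

/-! ### Auxiliary machinery -/

open Filter Topology

private lemma analyticAt_deriv' {f : ℂ → ℂ} {x : ℂ} (h : AnalyticAt ℂ f x) :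
    AnalyticAt ℂ (deriv f) x := by
  have h2 : AnalyticAt ℂ (fun y => (ContinuousLinearMap.apply ℂ ℂ (1:ℂ)) (fderiv ℂ f y)) x :=
    ((ContinuousLinearMap.apply ℂ ℂ (1:ℂ)).analyticAt _).comp h.fderiv
  have : (fun y => (ContinuousLinearMap.apply ℂ ℂ (1:ℂ)) (fderiv ℂ f y)) = deriv f := by
    ext y; simp [ContinuousLinearMap.apply_apply, fderiv_apply_one_eq_deriv]
  rwa [this] at h2

/-- Eventual equality on a punctured neighbourhood passes to derivatives. -/
private lemma evEq_deriv {f g : ℂ → ℂ} {x : ℂ} (h : f =ᶠ[𝓝[≠] x] g) :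
    deriv f =ᶠ[𝓝[≠] x] deriv g := by
  obtain ⟨u, hu, hxu, hsub⟩ := mem_nhdsWithin.mp h
  have hop : IsOpen (u ∩ {x}ᶜ) := hu.inter isOpen_compl_singleton
  have hmem : u ∩ {x}ᶜ ∈ 𝓝[≠] x := mem_nhdsWithin.mpr ⟨u, hu, hxu, fun z hz => hz⟩
  filter_upwards [hmem] with z hz
  have hev : f =ᶠ[𝓝 z] g := eventually_of_mem (hop.mem_nhds hz) (fun w hw => hsub hw)
  exact hev.deriv_eq

/-- `f` has order at least `d` at `x`, witnessed concretely. -/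
private def OrdGE (f : ℂ → ℂ) (x : ℂ) (d : ℤ) : Prop :=
  ∃ g : ℂ → ℂ, AnalyticAt ℂ g x ∧ ∀ᶠ z in 𝓝[≠] x, f z = (z - x) ^ d * g z

private lemma OrdGE.congr {f f' : ℂ → ℂ} {x : ℂ} {d : ℤ} (h : OrdGE f x d)
    (hff : f =ᶠ[𝓝[≠] x] f') : OrdGE f' x d := by
  obtain ⟨g, hg, he⟩ := h
  exact ⟨g, hg, by filter_upwards [he, hff] with z h1 h2; rw [← h2, h1]⟩

private lemma AnalyticAt.ordGE {f : ℂ → ℂ} {x : ℂ} (h : AnalyticAt ℂ f x) : OrdGE f x 0 :=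
  ⟨f, h, by filter_upwards with z; simp⟩

private lemma OrdGE.mono {f : ℂ → ℂ} {x : ℂ} {d e : ℤ} (h : OrdGE f x d) (hde : e ≤ d) :
    OrdGE f x e := by
  obtain ⟨g, hg, he⟩ := h
  refine ⟨fun z => (z - x) ^ (d - e).toNat * g z,
    (((analyticAt_id.sub analyticAt_const).pow _).mul hg), ?_⟩
  filter_upwards [he, self_mem_nhdsWithin] with z h1 (h2 : z ≠ x)
  have hzx : z - x ≠ 0 := sub_ne_zero.mpr h2
  rw [h1, ← mul_assoc, ← zpow_natCast (z - x) (d - e).toNat,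
    Int.toNat_of_nonneg (by omega), ← zpow_add₀ hzx]
  ring_nf

private lemma OrdGE.add {f g : ℂ → ℂ} {x : ℂ} {d : ℤ} (hf : OrdGE f x d) (hg : OrdGE g x d) :
    OrdGE (fun z => f z + g z) x d := by
  obtain ⟨u, hu, heu⟩ := hf
  obtain ⟨v, hv, hev⟩ := hg
  exact ⟨fun z => u z + v z, hu.add hv, by
    filter_upwards [heu, hev] with z h1 h2; rw [h1, h2]; ring⟩

private lemma OrdGE.neg {f : ℂ → ℂ} {x : ℂ} {d : ℤ} (hf : OrdGE f x d) :
    OrdGE (fun z => -(f z)) x d := by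
  obtain ⟨u, hu, heu⟩ := hf
  exact ⟨fun z => -(u z), hu.neg, by filter_upwards [heu] with z h1; rw [h1]; ring⟩

private lemma OrdGE.sub {f g : ℂ → ℂ} {x : ℂ} {d : ℤ} (hf : OrdGE f x d) (hg : OrdGE g x d) :
    OrdGE (fun z => f z - g z) x d := by
  have := hf.add hg.neg
  simpa [sub_eq_add_neg] using this

private lemma OrdGE.mul {f g : ℂ → ℂ} {x : ℂ} {d e : ℤ} (hf : OrdGE f x d) (hg : OrdGE g x e) :
    OrdGE (fun z => f z * g z) x (d + e) := by
  obtain ⟨u, hu, heu⟩ := hf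
  obtain ⟨v, hv, hev⟩ := hg
  refine ⟨fun z => u z * v z, hu.mul hv, ?_⟩
  filter_upwards [heu, hev, self_mem_nhdsWithin] with z h1 h2 (h3 : z ≠ x)
  rw [h1, h2, zpow_add₀ (sub_ne_zero.mpr h3)]; ring

private lemma OrdGE.meromorphicAt {f : ℂ → ℂ} {x : ℂ} {d : ℤ} (h : OrdGE f x d) :
    MeromorphicAt f x := by
  obtain ⟨g, hg, he⟩ := h
  have : MeromorphicAt (fun z => (z - x) ^ d * g z) x :=
    (((MeromorphicAt.id x).sub (MeromorphicAt.const x x)).zpow d).mul hg.meromorphicAt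
  exact this.congr (Filter.EventuallyEq.symm he)

private lemma le_order_of_ordGE {f : ℂ → ℂ} {x : ℂ} {d : ℤ} (hf : MeromorphicAt f x)
    (h : OrdGE f x d) : (d : WithTop ℤ) ≤ (meromorphicOrderAt f x) := by
  obtain ⟨g, hg, he⟩ := h
  rcases eq_or_ne (analyticOrderAt g x) ⊤ with htop | hfin
  · have hg0 : ∀ᶠ z in 𝓝 x, g z = 0 := analyticOrderAt_eq_top.mp htop
    have : (meromorphicOrderAt f x) = ⊤ := by
      rw [meromorphicOrderAt_eq_top_iff]
      filter_upwards [he, hg0.filter_mono nhdsWithin_le_nhds] with z h1 h2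
      rw [h1, h2, mul_zero]
    simp [this]
  · obtain ⟨j, hj⟩ := WithTop.ne_top_iff_exists.mp hfin
    obtain ⟨u, hu, hux, heu⟩ := (hg.analyticOrderAt_eq_natCast (n := j)).mp hj.symm
    have : (meromorphicOrderAt f x) = ((d + j : ℤ) : WithTop ℤ) := by
      rw [meromorphicOrderAt_eq_int_iff hf]
      refine ⟨u, hu, hux, ?_⟩
      filter_upwards [he, heu.filter_mono nhdsWithin_le_nhds, self_mem_nhdsWithin]
        with z h1 h2 (h3 : z ≠ x)
      rw [h1, h2, smul_eq_mul, smul_eq_mul, zpow_add₀ (sub_ne_zero.mpr h3), zpow_natCast]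
      ring
    rw [this, WithTop.coe_le_coe]
    omega

private lemma ordGE_of_le_order {f : ℂ → ℂ} {x : ℂ} {d : ℤ} (hf : MeromorphicAt f x)
    (h : (d : WithTop ℤ) ≤ (meromorphicOrderAt f x)) : OrdGE f x d := by
  rcases eq_or_ne (meromorphicOrderAt f x) ⊤ with htop | hfin
  · refine ⟨fun _ => 0, analyticAt_const, ?_⟩
    filter_upwards [meromorphicOrderAt_eq_top_iff.mp htop] with z h1
    rw [h1, mul_zero]
  · obtain ⟨v, hv⟩ := WithTop.ne_top_iff_exists.mp hfin
    obtain ⟨g, hg, hgx, heg⟩ := (meromorphicOrderAt_eq_int_iff hf).mp hv.symm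
    have hdv : d ≤ v := by rwa [← hv, WithTop.coe_le_coe] at h
    refine ⟨fun z => (z - x) ^ (v - d).toNat * g z,
      ((analyticAt_id.sub analyticAt_const).pow _).mul hg, ?_⟩
    filter_upwards [heg, self_mem_nhdsWithin] with z h1 (h2 : z ≠ x)
    have hzx : z - x ≠ 0 := sub_ne_zero.mpr h2
    rw [h1, smul_eq_mul, ← mul_assoc, ← zpow_natCast (z - x) (v - d).toNat,
      Int.toNat_of_nonneg (by omega), ← zpow_add₀ hzx]
    ring_nf

private lemma ordGE_deriv {f : ℂ → ℂ} {x : ℂ} {d : ℤ} (h : OrdGE f x d) :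
    OrdGE (deriv f) x (d - 1) := by
  obtain ⟨g, hg, he⟩ := h
  refine ⟨fun z => (d : ℂ) * g z + (z - x) * _root_.deriv g z,
    (analyticAt_const.mul hg).add ((analyticAt_id.sub analyticAt_const).mul
      (analyticAt_deriv' hg)), ?_⟩
  have h1 : deriv f =ᶠ[𝓝[≠] x] deriv (fun z => (z - x) ^ d * g z) := evEq_deriv he
  have h2 : ∀ᶠ z in 𝓝[≠] x, AnalyticAt ℂ g z :=
    hg.eventually_analyticAt.filter_mono nhdsWithin_le_nhds
  filter_upwards [h1, h2, self_mem_nhdsWithin] with z hz hgz (hzx : z ≠ x)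
  have hsub : z - x ≠ 0 := sub_ne_zero.mpr hzx
  have hpow : HasDerivAt (fun w : ℂ => (w - x) ^ d) ((d : ℂ) * (z - x) ^ (d - 1) * 1) z := by
    exact HasDerivAt.comp z (hasDerivAt_zpow d (z - x) (Or.inl hsub))
      ((hasDerivAt_id z).sub_const x)
  have hG : HasDerivAt (fun w : ℂ => (w - x) ^ d * g w)
      (((d : ℂ) * (z - x) ^ (d - 1) * 1) * g z + (z - x) ^ d * _root_.deriv g z) z :=
    hpow.mul hgz.differentiableAt.hasDerivAt
  rw [hz, hG.deriv]
  have hd : (z - x) ^ d = (z - x) ^ (d - 1) * (z - x) := by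
    conv_lhs => rw [show d = (d - 1) + 1 by ring]
    rw [zpow_add₀ hsub, zpow_one]
  rw [hd]; ring

private lemma ordGE_deriv₀ {f : ℂ → ℂ} {x : ℂ} (h : OrdGE f x 0) :
    OrdGE (deriv f) x 0 := by
  obtain ⟨g, hg, he⟩ := h
  have he' : f =ᶠ[𝓝[≠] x] g := by filter_upwards [he] with z h1; simpa using h1
  exact ⟨_root_.deriv g, analyticAt_deriv' hg,
    by filter_upwards [evEq_deriv he'] with z h1; simpa using h1⟩

private lemma order_zpow_exact {f : ℂ → ℂ} {x : ℂ} {v : ℤ} (hf : MeromorphicAt f x)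
    (hv : (meromorphicOrderAt f x) = (v : WithTop ℤ)) (n : ℤ) (hn : 0 < n)
    (hF : MeromorphicAt (fun z => f z ^ n) x) :
    meromorphicOrderAt (fun z => f z ^ n) x = ((n * v : ℤ) : WithTop ℤ) := by
  obtain ⟨g, hg, hgx, heg⟩ := (meromorphicOrderAt_eq_int_iff hf).mp hv
  rw [meromorphicOrderAt_eq_int_iff hF]
  refine ⟨fun z => g z ^ n.toNat, hg.pow _, pow_ne_zero _ hgx, ?_⟩
  filter_upwards [heg, self_mem_nhdsWithin] with z h1 (h2 : z ≠ x)
  have hzx : z - x ≠ 0 := sub_ne_zero.mpr h2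
  rw [h1, smul_eq_mul, smul_eq_mul, mul_zpow]
  congr 1
  · rw [← zpow_mul, mul_comm v n]
  · rw [← zpow_natCast (g z) n.toNat, Int.toNat_of_nonneg (by omega)]

private lemma det3_red₁ (a₁ a₂ a₃ b₁ b₂ b₃ c₁ c₂ c₃ : ℂ)
    (h1 : a₁ = 1 - a₂ - a₃) (h2 : b₁ = -b₂ - b₃) (h3 : c₁ = -c₂ - c₃) :
    Matrix.det !![a₁, a₂, a₃; b₁, b₂, b₃; c₁, c₂, c₃] = b₂ * c₃ - c₂ * b₃ := by
  subst h1 h2 h3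
  simp [Matrix.det_fin_three]
  ring

private lemma det3_red₂ (a₁ a₂ a₃ b₁ b₂ b₃ c₁ c₂ c₃ : ℂ)
    (h1 : a₃ = 1 - a₁ - a₂) (h2 : b₃ = -b₁ - b₂) (h3 : c₃ = -c₁ - c₂) :
    Matrix.det !![a₁, a₂, a₃; b₁, b₂, b₃; c₁, c₂, c₃] = b₁ * c₂ - c₁ * b₂ := by
  subst h1 h2 h3
  simp [Matrix.det_fin_three]
  ring

private lemma wronskian_red₁ {F₁ F₂ F₃ : ℂ → ℂ} {x : ℂ}
    (h₂ : MeromorphicAt F₂ x) (h₃ : MeromorphicAt F₃ x)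
    (hd₂ : MeromorphicAt (deriv F₂) x) (hd₃ : MeromorphicAt (deriv F₃) x)
    (hsum : ∀ᶠ z in 𝓝[≠] x, F₁ z + F₂ z + F₃ z = 1) :
    wronskian3 F₁ F₂ F₃ =ᶠ[𝓝[≠] x]
      fun z => deriv F₂ z * deriv (deriv F₃) z - deriv (deriv F₂) z * deriv F₃ z := by
  have e₁ : F₁ =ᶠ[𝓝[≠] x] fun z => 1 - F₂ z - F₃ z := by
    filter_upwards [hsum] with z hz
    show F₁ z = 1 - F₂ z - F₃ z
    linear_combination hz
  have e₁' : deriv F₁ =ᶠ[𝓝[≠] x] fun z => -(deriv F₂ z) - deriv F₃ z := by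
    refine (evEq_deriv e₁).trans ?_
    filter_upwards [h₂.eventually_analyticAt,
      h₃.eventually_analyticAt] with z a2 a3
    show deriv (fun z => 1 - F₂ z - F₃ z) z = -(deriv F₂ z) - deriv F₃ z
    rw [deriv_fun_sub ((differentiableAt_const _).fun_sub a2.differentiableAt) a3.differentiableAt,
      deriv_const_sub]
  have e₁'' : deriv (deriv F₁) =ᶠ[𝓝[≠] x]
      fun z => -(deriv (deriv F₂) z) - deriv (deriv F₃) z := by
    refine (evEq_deriv e₁').trans ?_
    filter_upwards [hd₂.eventually_analyticAt,
      hd₃.eventually_analyticAt] with z a2 a3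
    show deriv (fun z => -(deriv F₂ z) - deriv F₃ z) z
        = -(deriv (deriv F₂) z) - deriv (deriv F₃) z
    rw [deriv_fun_sub a2.differentiableAt.fun_neg a3.differentiableAt, deriv.fun_neg]
  filter_upwards [e₁, e₁', e₁''] with z hz h1 h2
  exact det3_red₁ _ _ _ _ _ _ _ _ _ hz h1 h2

private lemma wronskian_red₂ {F₁ F₂ F₃ : ℂ → ℂ} {x : ℂ}
    (h₁ : MeromorphicAt F₁ x) (h₂ : MeromorphicAt F₂ x)
    (hd₁ : MeromorphicAt (deriv F₁) x) (hd₂ : MeromorphicAt (deriv F₂) x)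
    (hsum : ∀ᶠ z in 𝓝[≠] x, F₁ z + F₂ z + F₃ z = 1) :
    wronskian3 F₁ F₂ F₃ =ᶠ[𝓝[≠] x]
      fun z => deriv F₁ z * deriv (deriv F₂) z - deriv (deriv F₁) z * deriv F₂ z := by
  have e₃ : F₃ =ᶠ[𝓝[≠] x] fun z => 1 - F₁ z - F₂ z := by
    filter_upwards [hsum] with z hz
    show F₃ z = 1 - F₁ z - F₂ z
    linear_combination hz
  have e₃' : deriv F₃ =ᶠ[𝓝[≠] x] fun z => -(deriv F₁ z) - deriv F₂ z := by
    refine (evEq_deriv e₃).trans ?_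
    filter_upwards [h₁.eventually_analyticAt,
      h₂.eventually_analyticAt] with z a1 a2
    show deriv (fun z => 1 - F₁ z - F₂ z) z = -(deriv F₁ z) - deriv F₂ z
    rw [deriv_fun_sub ((differentiableAt_const _).fun_sub a1.differentiableAt) a2.differentiableAt,
      deriv_const_sub]
  have e₃'' : deriv (deriv F₃) =ᶠ[𝓝[≠] x]
      fun z => -(deriv (deriv F₁) z) - deriv (deriv F₂) z := by
    refine (evEq_deriv e₃').trans ?_
    filter_upwards [hd₁.eventually_analyticAt,
      hd₂.eventually_analyticAt] with z a1 a2
    show deriv (fun z => -(deriv F₁ z) - deriv F₂ z) z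
        = -(deriv (deriv F₁) z) - deriv (deriv F₂) z
    rw [deriv_fun_sub a1.differentiableAt.fun_neg a2.differentiableAt, deriv.fun_neg]
  filter_upwards [e₃, e₃', e₃''] with z hz h1 h2
  exact det3_red₂ _ _ _ _ _ _ _ _ _ hz h1 h2

private lemma ordGE_wronskian_of_bounds {F₂ F₃ : ℂ → ℂ} {x : ℂ} {c₂ c₃ : ℤ}
    (h2' : OrdGE (deriv F₂) x c₂) (h2'' : OrdGE (deriv (deriv F₂)) x (c₂ - 1))
    (h3' : OrdGE (deriv F₃) x c₃) (h3'' : OrdGE (deriv (deriv F₃)) x (c₃ - 1)) :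
    OrdGE (fun z => deriv F₂ z * deriv (deriv F₃) z - deriv (deriv F₂) z * deriv F₃ z) x
      (c₂ + c₃ - 1) :=
  ((h2'.mul h3'').mono (by omega)).sub ((h2''.mul h3').mono (by omega))

private lemma one_sub_ordGE {Z : ℂ → ℂ} {x : ℂ} (hZ : OrdGE Z x 0) :
    OrdGE (fun z => 1 - Z z) x 0 :=
  (analyticAt_const (v := (1 : ℂ))).ordGE.sub hZ

private lemma le_pole_order {X Y Z : ℂ → ℂ} {x : ℂ}
    (hX : MeromorphicAt X x) (hY : MeromorphicAt Y x) (hZ0 : OrdGE Z x 0)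
    (hsum : ∀ᶠ z in 𝓝[≠] x, X z + Y z + Z z = 1)
    {u v : ℤ} (hu : (meromorphicOrderAt X x) = (u : WithTop ℤ)) (hv : (meromorphicOrderAt Y x) = (v : WithTop ℤ))
    (hvn : v ≤ 0) : v ≤ u := by
  have hY' : OrdGE Y x v := ordGE_of_le_order hY (le_of_eq hv.symm)
  have h2 : OrdGE (fun z => (1 - Z z) - Y z) x v := ((one_sub_ordGE hZ0).mono hvn).sub hY'
  have h3 : OrdGE X x v := by
    refine h2.congr ?_
    filter_upwards [hsum] with z hz
    show 1 - Z z - Y z = X z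
    linear_combination -hz
  have := le_order_of_ordGE hX h3
  rw [hu] at this
  exact_mod_cast this

private lemma no_single_pole {X Y Z : ℂ → ℂ} {x : ℂ}
    (hX : MeromorphicAt X x) (hY0 : OrdGE Y x 0) (hZ0 : OrdGE Z x 0)
    (hsum : ∀ᶠ z in 𝓝[≠] x, X z + Y z + Z z = 1)
    {u : ℤ} (hu : (meromorphicOrderAt X x) = (u : WithTop ℤ)) (hun : u < 0) : False := by
  have h2 : OrdGE (fun z => (1 - Z z) - Y z) x 0 := (one_sub_ordGE hZ0).sub hY0
  have h3 : OrdGE X x 0 := by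
    refine h2.congr ?_
    filter_upwards [hsum] with z hz
    show 1 - Z z - Y z = X z
    linear_combination -hz
  have := le_order_of_ordGE hX h3
  rw [hu] at this
  have : (0 : ℤ) ≤ u := by exact_mod_cast this
  omega

private lemma meroOrd_eq {f : ℂ → ℂ} {x : ℂ} (hf : MeromorphicAt f x) :
    meroOrd f x = WithTop.untopD 0 (meromorphicOrderAt f x) := by
  rw [meroOrd, dif_pos hf]

private lemma order_of_untop' {o : WithTop ℤ} {v : ℤ} (h : WithTop.untopD 0 o = v) (hv : v ≠ 0) :
    o = (v : WithTop ℤ) := by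
  cases o <;> simp_all

private lemma untop'_ge {o : WithTop ℤ} {d : ℤ} (hd : d ≤ 0) (h : (d : WithTop ℤ) ≤ o) :
    d ≤ WithTop.untopD 0 o := by
  cases o with
  | top => simpa using hd
  | coe v => simpa using (by exact_mod_cast h : d ≤ v)

/-- The analytic column: if `meroOrd f x = 0` then `f ^ k` has `OrdGE 0` and `meroOrd` zero. -/
private lemma analytic_col {f : ℂ → ℂ} {x : ℂ} {k : ℤ} (hk : 0 < k)
    (hfm : MeromorphicAt f x) (h0 : WithTop.untopD 0 (meromorphicOrderAt f x) = 0)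
    (hF : MeromorphicAt (fun z => f z ^ k) x) :
    OrdGE (fun z => f z ^ k) x 0 ∧ WithTop.untopD 0 (meromorphicOrderAt (fun z => f z ^ k) x) = 0 := by
  rcases eq_or_ne (meromorphicOrderAt f x) ⊤ with htop | hfin
  · have hev : ∀ᶠ z in 𝓝[≠] x, f z = 0 := meromorphicOrderAt_eq_top_iff.mp htop
    have hFtop : meromorphicOrderAt (fun z => f z ^ k) x = ⊤ := by
      rw [meromorphicOrderAt_eq_top_iff]
      filter_upwards [hev] with z h1
      rw [h1, zero_zpow k (by omega)]
    constructor
    · exact ordGE_of_le_order hF (by rw [hFtop]; exact le_top)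
    · rw [hFtop]; rfl
  · obtain ⟨v, hv⟩ := WithTop.ne_top_iff_exists.mp hfin
    have hv0 : v = 0 := by rw [← hv] at h0; simpa using h0
    subst hv0
    have hord : meromorphicOrderAt (fun z => f z ^ k) x = ((k * 0 : ℤ) : WithTop ℤ) :=
      order_zpow_exact hfm hv.symm k hk hF
    rw [mul_zero] at hord
    exact ⟨ordGE_of_le_order hF (le_of_eq hord.symm), by rw [hord]; rfl⟩

/-- The pole column: if `meroOrd f x = p < 0` then `f ^ k` has exact order `k * p`. -/
private lemma pole_col {f : ℂ → ℂ} {x : ℂ} {k p : ℤ} (hk : 0 < k)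
    (hfm : MeromorphicAt f x) (hp : WithTop.untopD 0 (meromorphicOrderAt f x) = p) (hpn : p < 0)
    (hF : MeromorphicAt (fun z => f z ^ k) x) :
    meromorphicOrderAt (fun z => f z ^ k) x = ((k * p : ℤ) : WithTop ℤ) :=
  order_zpow_exact hfm (order_of_untop' hp (by omega)) k hk hF

/-- Final numeric bookkeeping. -/
private lemma nevanA_le_of_bounds {F₁ F₂ F₃ : ℂ → ℂ} {x : ℂ} {a : ℤ} (ha : 6 ≤ a)
    (hz₁ : meroOrd F₁ x ≤ 0) (hz₂ : meroOrd F₂ x ≤ 0) (hz₃ : meroOrd F₃ x ≤ 0)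
    (hsum2a : meroOrd F₁ x + meroOrd F₂ x + meroOrd F₃ x = -(2 * a))
    (hW : -a - 2 ≤ meroOrd (wronskian3 F₁ F₂ F₃) x) :
    nevanA F₁ F₂ F₃ x ≤ 0 := by
  unfold nevanA zeroMult poleMult
  omega

/-- **Lemma 2.8.** Under the standing hypotheses (meromorphic non-constant `f, g, h`
with `f^n + g^m + h^k = 1`, `min {n,m,k} ≥ 6`, `f^n, g^m, h^k` linearly independent),
let `z₀` be a zero or pole of at least one of `f, g, h` and let `p, q, t` be the
orders of `f, g, h` at `z₀`. If `max {p,q,t} = 0` and `min {p,q,t} < 0`, then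
`A(z₀) ≤ 0`. -/
theorem nevanA_nonpos_of_max_zero_min_neg
    (f g h : ℂ → ℂ) (n m k : ℤ) (z₀ : ℂ)
    (hf : MeromorphicOn f Set.univ) (hg : MeromorphicOn g Set.univ)
    (hh : MeromorphicOn h Set.univ)
    (hfc : ¬ ∃ c : ℂ, ∀ z : ℂ, AnalyticAt ℂ f z → f z = c)
    (hgc : ¬ ∃ c : ℂ, ∀ z : ℂ, AnalyticAt ℂ g z → g z = c)
    (hhc : ¬ ∃ c : ℂ, ∀ z : ℂ, AnalyticAt ℂ h z → h z = c)
    (hmin : 6 ≤ min n (min m k))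
    (heq : ∀ z : ℂ, AnalyticAt ℂ f z → AnalyticAt ℂ g z → AnalyticAt ℂ h z →
      f z ^ n + g z ^ m + h z ^ k = 1)
    (hind : ∀ a b c : ℂ,
      (∀ z : ℂ, AnalyticAt ℂ f z → AnalyticAt ℂ g z → AnalyticAt ℂ h z →
        a * f z ^ n + b * g z ^ m + c * h z ^ k = 0) →
      a = 0 ∧ b = 0 ∧ c = 0)
    (p q t : ℤ) (hp : p = meroOrd f z₀) (hq : q = meroOrd g z₀) (ht : t = meroOrd h z₀)
    (hzp : p ≠ 0 ∨ q ≠ 0 ∨ t ≠ 0)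
    (hmaxpqt : max p (max q t) = 0) (hminpqt : min p (min q t) < 0) :
    nevanA (fun z => f z ^ n) (fun z => g z ^ m) (fun z => h z ^ k) z₀ ≤ 0 := by
  classical
  have hfm : MeromorphicAt f z₀ := hf z₀ (Set.mem_univ z₀)
  have hgm : MeromorphicAt g z₀ := hg z₀ (Set.mem_univ z₀)
  have hhm : MeromorphicAt h z₀ := hh z₀ (Set.mem_univ z₀)
  have hn6 : 6 ≤ n := le_trans hmin (min_le_left _ _)
  have hm6 : 6 ≤ m := le_trans hmin (le_trans (min_le_right _ _) (min_le_left _ _))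
  have hk6 : 6 ≤ k := le_trans hmin (le_trans (min_le_right _ _) (min_le_right _ _))
  set F₁ : ℂ → ℂ := fun z => f z ^ n with hF₁def
  set F₂ : ℂ → ℂ := fun z => g z ^ m with hF₂def
  set F₃ : ℂ → ℂ := fun z => h z ^ k with hF₃def
  have hF₁ : MeromorphicAt F₁ z₀ := hfm.zpow n
  have hF₂ : MeromorphicAt F₂ z₀ := hgm.zpow m
  have hF₃ : MeromorphicAt F₃ z₀ := hhm.zpow k
  have hsum : ∀ᶠ z in 𝓝[≠] z₀, F₁ z + F₂ z + F₃ z = 1 := by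
    filter_upwards [hfm.eventually_analyticAt, hgm.eventually_analyticAt,
      hhm.eventually_analyticAt] with z h1 h2 h3
    exact heq z h1 h2 h3
  have hsum213 : ∀ᶠ z in 𝓝[≠] z₀, F₂ z + F₁ z + F₃ z = 1 := by
    filter_upwards [hsum] with z hz; linear_combination hz
  have hsum132 : ∀ᶠ z in 𝓝[≠] z₀, F₁ z + F₃ z + F₂ z = 1 := by
    filter_upwards [hsum] with z hz; linear_combination hz
  have hsum312 : ∀ᶠ z in 𝓝[≠] z₀, F₃ z + F₁ z + F₂ z = 1 := by
    filter_upwards [hsum] with z hz; linear_combination hz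
  have hsum231 : ∀ᶠ z in 𝓝[≠] z₀, F₂ z + F₃ z + F₁ z = 1 := by
    filter_upwards [hsum] with z hz; linear_combination hz
  have hsum321 : ∀ᶠ z in 𝓝[≠] z₀, F₃ z + F₂ z + F₁ z = 1 := by
    filter_upwards [hsum] with z hz; linear_combination hz
  have hpf : WithTop.untopD 0 (meromorphicOrderAt f z₀) = p := by rw [hp, meroOrd_eq hfm]
  have hqg : WithTop.untopD 0 (meromorphicOrderAt g z₀) = q := by rw [hq, meroOrd_eq hgm]
  have hth : WithTop.untopD 0 (meromorphicOrderAt h z₀) = t := by rw [ht, meroOrd_eq hhm]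
  have hple : p ≤ 0 := by
    have h1 : p ≤ max p (max q t) := le_max_left _ _
    omega
  have hqle : q ≤ 0 := by
    have h1 : q ≤ max q t := le_max_left _ _
    have h2 : max q t ≤ max p (max q t) := le_max_right _ _
    omega
  have htle : t ≤ 0 := by
    have h1 : t ≤ max q t := le_max_right _ _
    have h2 : max q t ≤ max p (max q t) := le_max_right _ _
    omega
  have hone0 : p = 0 ∨ q = 0 ∨ t = 0 := by
    by_contra hcon
    push_neg at hcon
    obtain ⟨h1, h2, h3⟩ := hcon
    have : max p (max q t) < 0 :=
      max_lt (by omega) (max_lt (by omega) (by omega))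
    omega
  have honeneg : p < 0 ∨ q < 0 ∨ t < 0 := by
    rcases min_lt_iff.mp hminpqt with h1 | h1
    · exact Or.inl h1
    · rcases min_lt_iff.mp h1 with h2 | h2
      · exact Or.inr (Or.inl h2)
      · exact Or.inr (Or.inr h2)
  rcases eq_or_lt_of_le hple with hp0 | hplt
  · -- p = 0 : F₁ is the analytic column
    obtain ⟨A₁, M₁⟩ := analytic_col (by omega) hfm (by rw [hpf]; omega) hF₁
    rcases eq_or_lt_of_le hqle with hq0 | hqlt
    · -- q = 0 as well
      obtain ⟨A₂, M₂⟩ := analytic_col (by omega) hgm (by rw [hqg]; omega) hF₂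
      have htlt : t < 0 := by omega
      have ho₃ : (meromorphicOrderAt F₃ z₀) = ((k * t : ℤ) : WithTop ℤ) := pole_col (by omega) hhm hth htlt hF₃
      exact absurd (no_single_pole hF₃ A₁ A₂ hsum312 ho₃
        (mul_neg_of_pos_of_neg (by omega) htlt)) (fun hcon => hcon)
    · -- q < 0
      have ho₂ : (meromorphicOrderAt F₂ z₀) = ((m * q : ℤ) : WithTop ℤ) := pole_col (by omega) hgm hqg hqlt hF₂
      have hmq : m * q < 0 := mul_neg_of_pos_of_neg (by omega) hqlt
      rcases eq_or_lt_of_le htle with ht0 | htlt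
      · -- t = 0: single pole F₂, contradiction
        obtain ⟨A₃, M₃⟩ := analytic_col (by omega) hhm (by rw [hth]; omega) hF₃
        exact absurd (no_single_pole hF₂ A₁ A₃ hsum213 ho₂ hmq) (fun hcon => hcon)
      · -- q < 0, t < 0 : real case, analytic column F₁
        have ho₃ : (meromorphicOrderAt F₃ z₀) = ((k * t : ℤ) : WithTop ℤ) := pole_col (by omega) hhm hth htlt hF₃
        have hkt : k * t < 0 := mul_neg_of_pos_of_neg (by omega) htlt
        have he1 : k * t ≤ m * q := le_pole_order hF₂ hF₃ A₁ hsum231 ho₂ ho₃ (by omega)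
        have he2 : m * q ≤ k * t := le_pole_order hF₃ hF₂ A₁ hsum321 ho₃ ho₂ (by omega)
        have heqo : m * q = k * t := le_antisymm he2 he1
        have ha6 : 6 ≤ -(m * q) := by
          have h1 : 6 * 1 ≤ m * (-q) := by
            apply mul_le_mul (by omega) (by omega) (by omega) (by omega)
          have h2 : m * (-q) = -(m * q) := by ring
          omega
        have g₂ : OrdGE F₂ z₀ (m * q) := ordGE_of_le_order hF₂ (le_of_eq ho₂.symm)
        have g₁' := ordGE_deriv₀ A₁
        have g₁'' := ordGE_deriv₀ g₁'
        have g₂' := ordGE_deriv g₂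
        have g₂'' := ordGE_deriv g₂'
        have hWred := wronskian_red₂ hF₁ hF₂ g₁'.meromorphicAt g₂'.meromorphicAt hsum
        have hWb := ordGE_wronskian_of_bounds (c₂ := 0) (c₃ := m * q - 1)
          g₁' (g₁''.mono (by omega)) g₂' (g₂''.mono (by omega))
        have hW : OrdGE (wronskian3 F₁ F₂ F₃) z₀ (m * q - 2) :=
          (hWb.mono (by omega)).congr hWred.symm
        have hWm : MeromorphicAt (wronskian3 F₁ F₂ F₃) z₀ := hW.meromorphicAt
        have hM1 : meroOrd F₁ z₀ = 0 := by rw [meroOrd_eq hF₁]; exact M₁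
        have hM2 : meroOrd F₂ z₀ = m * q := by rw [meroOrd_eq hF₂, ho₂]; rfl
        have hM3 : meroOrd F₃ z₀ = k * t := by rw [meroOrd_eq hF₃, ho₃]; rfl
        have hMW : -(-(m * q)) - 2 ≤ meroOrd (wronskian3 F₁ F₂ F₃) z₀ := by
          rw [meroOrd_eq hWm]
          refine untop'_ge (by omega) ?_
          have h1 := le_order_of_ordGE hWm hW
          have h2 : ((-(-(m * q)) - 2 : ℤ) : WithTop ℤ) = ((m * q - 2 : ℤ) : WithTop ℤ) := by
            norm_num
          rw [h2]
          exact h1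
        exact nevanA_le_of_bounds ha6 (by omega) (by omega) (by omega) (by omega) hMW
  · -- p < 0
    have ho₁ : (meromorphicOrderAt F₁ z₀) = ((n * p : ℤ) : WithTop ℤ) := pole_col (by omega) hfm hpf hplt hF₁
    have hnp : n * p < 0 := mul_neg_of_pos_of_neg (by omega) hplt
    rcases eq_or_lt_of_le hqle with hq0 | hqlt
    · -- q = 0 : F₂ analytic
      obtain ⟨A₂, M₂⟩ := analytic_col (by omega) hgm (by rw [hqg]; omega) hF₂
      rcases eq_or_lt_of_le htle with ht0 | htlt
      · -- t = 0 : single pole F₁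
        obtain ⟨A₃, M₃⟩ := analytic_col (by omega) hhm (by rw [hth]; omega) hF₃
        exact absurd (no_single_pole hF₁ A₂ A₃ hsum ho₁ hnp) (fun hcon => hcon)
      · -- p < 0, t < 0 : real case, analytic column F₂
        have ho₃ : (meromorphicOrderAt F₃ z₀) = ((k * t : ℤ) : WithTop ℤ) := pole_col (by omega) hhm hth htlt hF₃
        have hkt : k * t < 0 := mul_neg_of_pos_of_neg (by omega) htlt
        have he1 : k * t ≤ n * p := le_pole_order hF₁ hF₃ A₂ hsum132 ho₁ ho₃ (by omega)
        have he2 : n * p ≤ k * t := le_pole_order hF₃ hF₁ A₂ hsum312 ho₃ ho₁ (by omega)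
        have heqo : n * p = k * t := le_antisymm he2 he1
        have ha6 : 6 ≤ -(n * p) := by
          have h1 : 6 * 1 ≤ n * (-p) := by
            apply mul_le_mul (by omega) (by omega) (by omega) (by omega)
          have h2 : n * (-p) = -(n * p) := by ring
          omega
        have g₃ : OrdGE F₃ z₀ (k * t) := ordGE_of_le_order hF₃ (le_of_eq ho₃.symm)
        have g₂' := ordGE_deriv₀ A₂
        have g₂'' := ordGE_deriv₀ g₂'
        have g₃' := ordGE_deriv g₃
        have g₃'' := ordGE_deriv g₃'
        have hWred := wronskian_red₁ hF₂ hF₃ g₂'.meromorphicAt g₃'.meromorphicAt hsum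
        have hWb := ordGE_wronskian_of_bounds (c₂ := 0) (c₃ := k * t - 1)
          g₂' (g₂''.mono (by omega)) g₃' (g₃''.mono (by omega))
        have hW : OrdGE (wronskian3 F₁ F₂ F₃) z₀ (k * t - 2) :=
          (hWb.mono (by omega)).congr hWred.symm
        have hWm : MeromorphicAt (wronskian3 F₁ F₂ F₃) z₀ := hW.meromorphicAt
        have hM1 : meroOrd F₁ z₀ = n * p := by rw [meroOrd_eq hF₁, ho₁]; rfl
        have hM2 : meroOrd F₂ z₀ = 0 := by rw [meroOrd_eq hF₂]; exact M₂
        have hM3 : meroOrd F₃ z₀ = k * t := by rw [meroOrd_eq hF₃, ho₃]; rfl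
        have hMW : -(-(n * p)) - 2 ≤ meroOrd (wronskian3 F₁ F₂ F₃) z₀ := by
          rw [meroOrd_eq hWm]
          refine untop'_ge (by omega) ?_
          have h1 := le_order_of_ordGE hWm hW
          have h2 : ((-(-(n * p)) - 2 : ℤ) : WithTop ℤ) = ((k * t - 2 : ℤ) : WithTop ℤ) := by
            rw [show -(-(n * p)) - 2 = k * t - 2 by omega]
          rw [h2]
          exact h1
        exact nevanA_le_of_bounds ha6 (by omega) (by omega) (by omega) (by omega) hMW
    · -- p < 0, q < 0
      have ho₂ : (meromorphicOrderAt F₂ z₀) = ((m * q : ℤ) : WithTop ℤ) := pole_col (by omega) hgm hqg hqlt hF₂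
      have hmq : m * q < 0 := mul_neg_of_pos_of_neg (by omega) hqlt
      have ht0 : t = 0 := by omega
      -- real case, analytic column F₃
      obtain ⟨A₃, M₃⟩ := analytic_col (by omega) hhm (by rw [hth]; omega) hF₃
      have he1 : m * q ≤ n * p := le_pole_order hF₁ hF₂ A₃ hsum ho₁ ho₂ (by omega)
      have he2 : n * p ≤ m * q := le_pole_order hF₂ hF₁ A₃ hsum213 ho₂ ho₁ (by omega)
      have heqo : n * p = m * q := le_antisymm he2 he1
      have ha6 : 6 ≤ -(n * p) := by
        have h1 : 6 * 1 ≤ n * (-p) := by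
          apply mul_le_mul (by omega) (by omega) (by omega) (by omega)
        have h2 : n * (-p) = -(n * p) := by ring
        omega
      have g₂ : OrdGE F₂ z₀ (m * q) := ordGE_of_le_order hF₂ (le_of_eq ho₂.symm)
      have g₂' := ordGE_deriv g₂
      have g₂'' := ordGE_deriv g₂'
      have g₃' := ordGE_deriv₀ A₃
      have g₃'' := ordGE_deriv₀ g₃'
      have hWred := wronskian_red₁ hF₂ hF₃ g₂'.meromorphicAt g₃'.meromorphicAt hsum
      have hWb := ordGE_wronskian_of_bounds (c₂ := m * q - 1) (c₃ := 0)
        g₂' (g₂''.mono (by omega)) g₃' (g₃''.mono (by omega))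
      have hW : OrdGE (wronskian3 F₁ F₂ F₃) z₀ (m * q - 2) :=
        (hWb.mono (by omega)).congr hWred.symm
      have hWm : MeromorphicAt (wronskian3 F₁ F₂ F₃) z₀ := hW.meromorphicAt
      have hM1 : meroOrd F₁ z₀ = n * p := by rw [meroOrd_eq hF₁, ho₁]; rfl
      have hM2 : meroOrd F₂ z₀ = m * q := by rw [meroOrd_eq hF₂, ho₂]; rfl
      have hM3 : meroOrd F₃ z₀ = 0 := by rw [meroOrd_eq hF₃]; exact M₃
      have hMW : -(-(n * p)) - 2 ≤ meroOrd (wronskian3 F₁ F₂ F₃) z₀ := by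
        rw [meroOrd_eq hWm]
        refine untop'_ge (by omega) ?_
        have h1 := le_order_of_ordGE hWm hW
        have h2 : ((-(-(n * p)) - 2 : ℤ) : WithTop ℤ) = ((m * q - 2 : ℤ) : WithTop ℤ) := by
          rw [show -(-(n * p)) - 2 = m * q - 2 by omega]
        rw [h2]
        exact h1
      exact nevanA_le_of_bounds ha6 (by omega) (by omega) (by omega) (by omega) hMW
end

section
/- Let f, g, h be non-constant meromorphic functions on ℂ satisfying f^n + g^m + h^k = 1 with min{n, m, k} ≥ 2 and with f^n, g^m, h^k linearly independent over ℂ, let D = W(f^n, g^m, h^k) be their Wronskian, and let z₀ ∈ ℂ be a point with p, q, t the orders of f, g, h at z₀. If max{p, q, t} < 0 (so z₀ is a common pole of f, g, h), max{n|p|, m|q|, k|t|} > min{n|p|, m|q|, k|t|}, and k|t| = min{n|p|, m|q|, k|t|}, then A(z₀) ≤ 9 − (m|q| − k|t|). -/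
open Filter Topology

private lemma zpow_split {z : ℂ} (hz : z ≠ 0) {a b : ℤ} (hab : a ≤ b) :
    z ^ b = z ^ a * z ^ (b - a).toNat := by
  rw [← zpow_natCast z (b - a).toNat, Int.toNat_of_nonneg (by omega), ← zpow_add₀ hz]
  congr 1
  omega

private lemma rep_merom {F u : ℂ → ℂ} {x : ℂ} {N : ℤ} (hu : AnalyticAt ℂ u x)
    (h : ∀ᶠ z in 𝓝[≠] x, F z = (z - x) ^ N * u z) :
    MeromorphicAt F x :=
  MeromorphicAt.iff_eventuallyEq_zpow_smul_analyticAt.mpr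
    ⟨N, u, hu, by simpa [smul_eq_mul] using h⟩

private lemma rep_order_eq {F u : ℂ → ℂ} {x : ℂ} {N : ℤ} (hu : AnalyticAt ℂ u x)
    (hu0 : u x ≠ 0) (h : ∀ᶠ z in 𝓝[≠] x, F z = (z - x) ^ N * u z)
    (hF : MeromorphicAt F x) : meromorphicOrderAt F x = N :=
  (meromorphicOrderAt_eq_int_iff hF (n := N)).mpr ⟨u, hu, hu0, by simpa [smul_eq_mul] using h⟩

private lemma rep_order_ge {F u : ℂ → ℂ} {x : ℂ} {N : ℤ} (hu : AnalyticAt ℂ u x)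
    (h : ∀ᶠ z in 𝓝[≠] x, F z = (z - x) ^ N * u z) (hF : MeromorphicAt F x) :
    (N : WithTop ℤ) ≤ meromorphicOrderAt F x := by
  rcases eq_or_ne (analyticOrderAt u x) ⊤ with ho | ho
  · have : meromorphicOrderAt F x = ⊤ := by
      rw [meromorphicOrderAt_eq_top_iff]
      filter_upwards [h, (analyticOrderAt_eq_top.mp ho).filter_mono nhdsWithin_le_nhds]
        with z h1 h2
      rw [h1, h2, mul_zero]
    simp [this]
  · obtain ⟨j, hj⟩ := WithTop.ne_top_iff_exists.mp ho
    obtain ⟨w, hw, hw0, hweq⟩ := (hu.analyticOrderAt_eq_natCast (n := j)).mp hj.symm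
    have : meromorphicOrderAt F x = N + j := by
      refine rep_order_eq hw hw0 ?_ hF
      filter_upwards [h, hweq.filter_mono nhdsWithin_le_nhds, self_mem_nhdsWithin]
        with z h1 h2 hz
      have hne : z - x ≠ 0 := sub_ne_zero.mpr hz
      rw [h1, h2, smul_eq_mul, zpow_add₀ hne, zpow_natCast]
      ring
    rw [this]
    exact_mod_cast WithTop.coe_le_coe.mpr (by omega : N ≤ N + (j:ℤ))

private lemma analyticAt_deriv {u : ℂ → ℂ} {x : ℂ} (hu : AnalyticAt ℂ u x) :
    AnalyticAt ℂ (deriv u) x :=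
  (AnalyticOnNhd.deriv (fun y (hy : y ∈ ({x} : Set ℂ)) => hy ▸ hu)) x rfl

private lemma rep_deriv {F u : ℂ → ℂ} {x : ℂ} {N : ℤ} (hu : AnalyticAt ℂ u x)
    (h : ∀ᶠ z in 𝓝[≠] x, F z = (z - x) ^ N * u z) :
    ∃ v : ℂ → ℂ, AnalyticAt ℂ v x ∧
      ∀ᶠ z in 𝓝[≠] x, deriv F z = (z - x) ^ (N - 1) * v z := by
  refine ⟨fun z => N * u z + (z - x) * deriv u z,
    (analyticAt_const.mul hu).add
      ((analyticAt_id.sub analyticAt_const).mul (analyticAt_deriv hu)), ?_⟩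
  obtain ⟨V, hVo, hxV, hV⟩ := mem_nhdsWithin.mp h
  obtain ⟨V', hsub, hV'o, hxV'⟩ := eventually_nhds_iff.mp hu.eventually_analyticAt
  refine mem_nhdsWithin.mpr ⟨V ∩ V', hVo.inter hV'o, ⟨hxV, hxV'⟩, ?_⟩
  rintro z ⟨⟨hzV, hzV'⟩, hzx⟩
  have hzx' : z ≠ x := hzx
  have hne : z - x ≠ 0 := sub_ne_zero.mpr hzx'
  have hWo : IsOpen ((V ∩ V') ∩ {x}ᶜ) :=
    (hVo.inter hV'o).inter isOpen_compl_singleton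
  have hev : F =ᶠ[𝓝 z] fun w => (w - x) ^ N * u w := by
    filter_upwards [hWo.mem_nhds ⟨⟨hzV, hzV'⟩, hzx⟩] with w hw
    exact hV ⟨hw.1.1, hw.2⟩
  have h1 : HasDerivAt (fun w : ℂ => (w - x) ^ N) ((N * (z - x) ^ (N - 1)) * 1) z :=
    by have := (hasDerivAt_zpow N (z - x) (Or.inl hne)).comp z ((hasDerivAt_id z).sub_const x); exact this
  have h2 : HasDerivAt u (deriv u z) z := (hsub z hzV').differentiableAt.hasDerivAt
  have h3 : HasDerivAt (fun w => (w - x) ^ N * u w) _ z := h1.mul h2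
  show deriv F z = (z - x) ^ (N - 1) * (N * u z + (z - x) * deriv u z)
  rw [hev.deriv_eq, h3.deriv]
  have hzp : (z - x) ^ N = (z - x) ^ (N - 1) * (z - x) := by
    rw [← zpow_add_one₀ hne, sub_add_cancel]
  rw [hzp]
  ring

private lemma no_unique_min {F G H U V W : ℂ → ℂ} {x : ℂ} {a b c : ℤ}
    (hU : AnalyticAt ℂ U x) (hV : AnalyticAt ℂ V x) (hW : AnalyticAt ℂ W x)
    (hU0 : U x ≠ 0) (ha : a ≠ 0) (hab : a < b) (hac : a < c)
    (hF : ∀ᶠ z in 𝓝[≠] x, F z = (z - x) ^ a * U z)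
    (hG : ∀ᶠ z in 𝓝[≠] x, G z = (z - x) ^ b * V z)
    (hH : ∀ᶠ z in 𝓝[≠] x, H z = (z - x) ^ c * W z)
    (hsum : ∀ᶠ z in 𝓝[≠] x, F z + G z + H z = 1) : False := by
  set Q : ℂ → ℂ := fun z =>
    U z + (z - x) ^ (b - a).toNat * V z + (z - x) ^ (c - a).toNat * W z with hQdef
  have hQ : AnalyticAt ℂ Q x := by
    apply AnalyticAt.add
    apply AnalyticAt.add hU
    · exact (((analyticAt_id.sub analyticAt_const).pow _).mul hV)
    · exact (((analyticAt_id.sub analyticAt_const).pow _).mul hW)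
  have hQ0 : Q x = U x := by
    simp [hQdef, sub_self, zero_pow (by omega : (b - a).toNat ≠ 0),
      zero_pow (by omega : (c - a).toNat ≠ 0)]
  have hrep : ∀ᶠ z in 𝓝[≠] x, (fun z => F z + G z + H z) z = (z - x) ^ a * Q z := by
    filter_upwards [hF, hG, hH, self_mem_nhdsWithin] with z h1 h2 h3 hz
    have hne : z - x ≠ 0 := sub_ne_zero.mpr hz
    rw [h1, h2, h3, hQdef, zpow_split hne hab.le, zpow_split hne hac.le]
    ring
  have hM : MeromorphicAt (fun z => F z + G z + H z) x := rep_merom hQ hrep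
  have h1 : meromorphicOrderAt (fun z => F z + G z + H z) x = a := rep_order_eq hQ (hQ0 ▸ hU0) hrep hM
  have h2 : meromorphicOrderAt (fun z => F z + G z + H z) x = (0 : ℤ) := by
    refine (meromorphicOrderAt_eq_int_iff hM (n := 0)).mpr ⟨fun _ => 1, analyticAt_const, one_ne_zero, ?_⟩
    filter_upwards [hsum] with z hz
    simpa using hz
  rw [h1] at h2
  exact ha (by exact_mod_cast h2)

private lemma order_from_meroOrd {f : ℂ → ℂ} {x : ℂ} {p : ℤ} (hm : MeromorphicAt f x)
    (hp : p = meroOrd f x) (hp0 : p ≠ 0) : meromorphicOrderAt f x = (p : WithTop ℤ) := by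
  unfold meroOrd at hp
  rw [dif_pos hm] at hp
  rcases eq_or_ne (meromorphicOrderAt f x) ⊤ with ho | ho
  · rw [ho] at hp
    simp at hp
    exact absurd hp hp0
  · obtain ⟨d, hd⟩ := WithTop.ne_top_iff_exists.mp ho
    rw [← hd] at hp ⊢
    simp at hp
    rw [hp]

/-- **Lemma 2.10.** Under the standing hypotheses (meromorphic non-constant `f, g, h`
with `f^n + g^m + h^k = 1`, `min {n,m,k} ≥ 2`, `f^n, g^m, h^k` linearly independent),
let `p, q, t` be the orders of `f, g, h` at a point `z₀`. If `max {p,q,t} < 0`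
(so `z₀` is a common pole of `f, g, h`), `max {n|p|, m|q|, k|t|} > min {n|p|, m|q|, k|t|}`
and `k|t| = min {n|p|, m|q|, k|t|}`, then `A(z₀) ≤ 9 − (m|q| − k|t|)`. -/
theorem nevanA_bound_of_common_pole_unequal
    (f g h : ℂ → ℂ) (n m k : ℤ) (z₀ : ℂ)
    (hf : MeromorphicOn f Set.univ) (hg : MeromorphicOn g Set.univ)
    (hh : MeromorphicOn h Set.univ)
    (hfc : ¬ ∃ c : ℂ, ∀ z : ℂ, AnalyticAt ℂ f z → f z = c)
    (hgc : ¬ ∃ c : ℂ, ∀ z : ℂ, AnalyticAt ℂ g z → g z = c)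
    (hhc : ¬ ∃ c : ℂ, ∀ z : ℂ, AnalyticAt ℂ h z → h z = c)
    (hmin : 2 ≤ min n (min m k))
    (heq : ∀ z : ℂ, AnalyticAt ℂ f z → AnalyticAt ℂ g z → AnalyticAt ℂ h z →
      f z ^ n + g z ^ m + h z ^ k = 1)
    (hind : ∀ a b c : ℂ,
      (∀ z : ℂ, AnalyticAt ℂ f z → AnalyticAt ℂ g z → AnalyticAt ℂ h z →
        a * f z ^ n + b * g z ^ m + c * h z ^ k = 0) →
      a = 0 ∧ b = 0 ∧ c = 0)
    (p q t : ℤ) (hp : p = meroOrd f z₀) (hq : q = meroOrd g z₀) (ht : t = meroOrd h z₀)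
    (hmaxpqt : max p (max q t) < 0)
    (hne : min (n * |p|) (min (m * |q|) (k * |t|)) < max (n * |p|) (max (m * |q|) (k * |t|)))
    (hktmin : k * |t| = min (n * |p|) (min (m * |q|) (k * |t|))) :
    nevanA (fun z => f z ^ n) (fun z => g z ^ m) (fun z => h z ^ k) z₀ ≤
      9 - (m * |q| - k * |t|) := by
  classical
  have hn2 : 2 ≤ n := le_trans hmin (min_le_left _ _)
  have hm2 : 2 ≤ m := le_trans hmin ((min_le_right _ _).trans (min_le_left _ _))
  have hk2 : 2 ≤ k := le_trans hmin ((min_le_right _ _).trans (min_le_right _ _))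
  obtain ⟨N, rfl⟩ : ∃ N : ℕ, n = (N : ℤ) := ⟨n.toNat, (Int.toNat_of_nonneg (by omega)).symm⟩
  obtain ⟨M, rfl⟩ : ∃ M : ℕ, m = (M : ℤ) := ⟨m.toNat, (Int.toNat_of_nonneg (by omega)).symm⟩
  obtain ⟨K, rfl⟩ : ∃ K : ℕ, k = (K : ℤ) := ⟨k.toNat, (Int.toNat_of_nonneg (by omega)).symm⟩
  have hp0 : p < 0 := lt_of_le_of_lt (le_max_left _ _) hmaxpqt
  have hq0 : q < 0 := lt_of_le_of_lt ((le_max_left _ _).trans (le_max_right _ _)) hmaxpqt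
  have ht0 : t < 0 := lt_of_le_of_lt ((le_max_right _ _).trans (le_max_right _ _)) hmaxpqt
  have hgf : (fun z : ℂ => f z ^ (N : ℤ)) = fun z => f z ^ N := funext fun z => zpow_natCast _ N
  have hgg : (fun z : ℂ => g z ^ (M : ℤ)) = fun z => g z ^ M := funext fun z => zpow_natCast _ M
  have hgh : (fun z : ℂ => h z ^ (K : ℤ)) = fun z => h z ^ K := funext fun z => zpow_natCast _ K
  rw [hgf, hgg, hgh]
  set F₁ : ℂ → ℂ := fun z => f z ^ N with hF₁def
  set F₂ : ℂ → ℂ := fun z => g z ^ M with hF₂def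
  set F₃ : ℂ → ℂ := fun z => h z ^ K with hF₃def
  have hfm : MeromorphicAt f z₀ := hf z₀ (Set.mem_univ z₀)
  have hgm : MeromorphicAt g z₀ := hg z₀ (Set.mem_univ z₀)
  have hhm : MeromorphicAt h z₀ := hh z₀ (Set.mem_univ z₀)
  have horf : meromorphicOrderAt f z₀ = (p : WithTop ℤ) := order_from_meroOrd hfm hp (by omega)
  have horg : meromorphicOrderAt g z₀ = (q : WithTop ℤ) := order_from_meroOrd hgm hq (by omega)
  have horh : meromorphicOrderAt h z₀ = (t : WithTop ℤ) := order_from_meroOrd hhm ht (by omega)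
  obtain ⟨u₁, hu₁an, hu₁0, hueq'⟩ := (meromorphicOrderAt_eq_int_iff hfm (n := p)).mp horf
  obtain ⟨u₂, hu₂an, hu₂0, hveq'⟩ := (meromorphicOrderAt_eq_int_iff hgm (n := q)).mp horg
  obtain ⟨u₃, hu₃an, hu₃0, hweq'⟩ := (meromorphicOrderAt_eq_int_iff hhm (n := t)).mp horh
  have hueq : ∀ᶠ z in 𝓝[≠] z₀, f z = (z - z₀) ^ p * u₁ z := by
    simpa only [smul_eq_mul] using hueq'
  have hveq : ∀ᶠ z in 𝓝[≠] z₀, g z = (z - z₀) ^ q * u₂ z := by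
    simpa only [smul_eq_mul] using hveq'
  have hweq : ∀ᶠ z in 𝓝[≠] z₀, h z = (z - z₀) ^ t * u₃ z := by
    simpa only [smul_eq_mul] using hweq'
  obtain ⟨a, hadef⟩ : ∃ a : ℤ, a = p * (N : ℤ) := ⟨_, rfl⟩
  obtain ⟨b, hbdef⟩ : ∃ b : ℤ, b = q * (M : ℤ) := ⟨_, rfl⟩
  obtain ⟨c, hcdef⟩ : ∃ c : ℤ, c = t * (K : ℤ) := ⟨_, rfl⟩
  have hF1 : ∀ᶠ z in 𝓝[≠] z₀, F₁ z = (z - z₀) ^ a * (fun y => u₁ y ^ N) z := by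
    filter_upwards [hueq] with z h1
    simp only [hF₁def]
    rw [h1, mul_pow, ← zpow_natCast ((z - z₀) ^ p) N, ← zpow_mul, hadef]
  have hF2 : ∀ᶠ z in 𝓝[≠] z₀, F₂ z = (z - z₀) ^ b * (fun y => u₂ y ^ M) z := by
    filter_upwards [hveq] with z h1
    simp only [hF₂def]
    rw [h1, mul_pow, ← zpow_natCast ((z - z₀) ^ q) M, ← zpow_mul, hbdef]
  have hF3 : ∀ᶠ z in 𝓝[≠] z₀, F₃ z = (z - z₀) ^ c * (fun y => u₃ y ^ K) z := by
    filter_upwards [hweq] with z h1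
    simp only [hF₃def]
    rw [h1, mul_pow, ← zpow_natCast ((z - z₀) ^ t) K, ← zpow_mul, hcdef]
  have hU1 : AnalyticAt ℂ (fun y => u₁ y ^ N) z₀ := hu₁an.pow N
  have hU2 : AnalyticAt ℂ (fun y => u₂ y ^ M) z₀ := hu₂an.pow M
  have hU3 : AnalyticAt ℂ (fun y => u₃ y ^ K) z₀ := hu₃an.pow K
  have hU10 : (fun y => u₁ y ^ N) z₀ ≠ 0 := pow_ne_zero _ hu₁0
  have hU20 : (fun y => u₂ y ^ M) z₀ ≠ 0 := pow_ne_zero _ hu₂0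
  have hU30 : (fun y => u₃ y ^ K) z₀ ≠ 0 := pow_ne_zero _ hu₃0
  have hNpos : (0 : ℤ) < (N : ℤ) := by omega
  have hMpos : (0 : ℤ) < (M : ℤ) := by omega
  have hKpos : (0 : ℤ) < (K : ℤ) := by omega
  have ha0 : a < 0 := hadef ▸ mul_neg_of_neg_of_pos hp0 hNpos
  have hb0 : b < 0 := hbdef ▸ mul_neg_of_neg_of_pos hq0 hMpos
  have hc0 : c < 0 := hcdef ▸ mul_neg_of_neg_of_pos ht0 hKpos
  have hra : (N : ℤ) * |p| = -a := by rw [abs_of_neg hp0, hadef]; ring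
  have hrb : (M : ℤ) * |q| = -b := by rw [abs_of_neg hq0, hbdef]; ring
  have hrc : (K : ℤ) * |t| = -c := by rw [abs_of_neg ht0, hcdef]; ring
  have hac : a ≤ c := by
    have h1 : (K : ℤ) * |t| ≤ (N : ℤ) * |p| := hktmin.le.trans (min_le_left _ _)
    rw [hra, hrc] at h1; omega
  have hbc : b ≤ c := by
    have h1 : (K : ℤ) * |t| ≤ (M : ℤ) * |q| :=
      hktmin.le.trans ((min_le_right _ _).trans (min_le_left _ _))
    rw [hrb, hrc] at h1; omega
  have hsum : ∀ᶠ z in 𝓝[≠] z₀, F₁ z + F₂ z + F₃ z = 1 := by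
    filter_upwards [hfm.eventually_analyticAt, hgm.eventually_analyticAt,
      hhm.eventually_analyticAt] with z h1 h2 h3
    have h0 := heq z h1 h2 h3
    simpa only [zpow_natCast] using h0
  have hab : a = b := by
    rcases lt_trichotomy a b with hlt | heqab | hgt
    · exact (no_unique_min hU1 hU2 hU3 hU10 (by omega) hlt (lt_of_lt_of_le hlt hbc)
        hF1 hF2 hF3 hsum).elim
    · exact heqab
    · refine (no_unique_min hU2 hU1 hU3 hU20 (by omega) hgt (lt_of_lt_of_le hgt hac)
        hF2 hF1 hF3 ?_).elim
      filter_upwards [hsum] with z hz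
      rw [← hz]; ring
  -- Wronskian reduction on a punctured neighbourhood
  obtain ⟨V, hVo, hxV, hVsub⟩ := mem_nhdsWithin.mp
    (show {z : ℂ | AnalyticAt ℂ f z ∧ AnalyticAt ℂ g z ∧ AnalyticAt ℂ h z} ∈ 𝓝[≠] z₀ by
      filter_upwards [hfm.eventually_analyticAt, hgm.eventually_analyticAt,
        hhm.eventually_analyticAt] with z h1 h2 h3
      exact ⟨h1, h2, h3⟩)
  have hWo : IsOpen (V ∩ {z₀}ᶜ) := hVo.inter isOpen_compl_singleton
  have hF2on : AnalyticOnNhd ℂ F₂ (V ∩ {z₀}ᶜ) := fun z hz => ((hVsub hz).2.1).pow M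
  have hF3on : AnalyticOnNhd ℂ F₃ (V ∩ {z₀}ᶜ) := fun z hz => ((hVsub hz).2.2).pow K
  have hid : ∀ z ∈ V ∩ {z₀}ᶜ, F₁ z = 1 - F₂ z - F₃ z := by
    intro z hz
    have h0 := heq z (hVsub hz).1 (hVsub hz).2.1 (hVsub hz).2.2
    simp only [zpow_natCast] at h0
    simp only [hF₁def, hF₂def, hF₃def]
    linear_combination h0
  have d1 : ∀ z ∈ V ∩ {z₀}ᶜ, deriv F₁ z = -deriv F₂ z - deriv F₃ z := by
    intro z hz
    have hev : F₁ =ᶠ[𝓝 z] fun y => 1 - F₂ y - F₃ y :=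
      eventually_of_mem (hWo.mem_nhds hz) hid
    rw [hev.deriv_eq, deriv_fun_sub ((differentiableAt_const (1 : ℂ)).fun_sub
      (hF2on z hz).differentiableAt) (hF3on z hz).differentiableAt,
      deriv_fun_sub (differentiableAt_const (1 : ℂ)) (hF2on z hz).differentiableAt, deriv_const]
    ring
  have hdF2on : AnalyticOnNhd ℂ (deriv F₂) (V ∩ {z₀}ᶜ) := hF2on.deriv
  have hdF3on : AnalyticOnNhd ℂ (deriv F₃) (V ∩ {z₀}ᶜ) := hF3on.deriv
  have d2 : ∀ z ∈ V ∩ {z₀}ᶜ,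
      deriv (deriv F₁) z = -deriv (deriv F₂) z - deriv (deriv F₃) z := by
    intro z hz
    have hev : deriv F₁ =ᶠ[𝓝 z] fun y => -deriv F₂ y - deriv F₃ y :=
      eventually_of_mem (hWo.mem_nhds hz) d1
    rw [hev.deriv_eq, deriv_fun_sub ((hdF2on z hz).differentiableAt.fun_neg)
      (hdF3on z hz).differentiableAt, deriv.fun_neg]
  have hDW : ∀ z ∈ V ∩ {z₀}ᶜ, wronskian3 F₁ F₂ F₃ z
      = deriv F₂ z * deriv (deriv F₃) z - deriv F₃ z * deriv (deriv F₂) z := by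
    intro z hz
    simp only [wronskian3]
    rw [Matrix.det_fin_three, hid z hz, d1 z hz, d2 z hz]
    simp
    ring
  have hDev : ∀ᶠ z in 𝓝[≠] z₀, wronskian3 F₁ F₂ F₃ z
      = deriv F₂ z * deriv (deriv F₃) z - deriv F₃ z * deriv (deriv F₂) z :=
    mem_nhdsWithin.mpr ⟨V, hVo, hxV, fun z hz => hDW z hz⟩
  obtain ⟨v₂, hv₂an, hv₂⟩ := rep_deriv hU2 hF2
  obtain ⟨w₂, hw₂an, hw₂⟩ := rep_deriv hv₂an hv₂
  obtain ⟨v₃, hv₃an, hv₃⟩ := rep_deriv hU3 hF3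
  obtain ⟨w₃, hw₃an, hw₃⟩ := rep_deriv hv₃an hv₃
  have hEan : AnalyticAt ℂ (fun z => v₂ z * w₃ z - v₃ z * w₂ z) z₀ :=
    (hv₂an.mul hw₃an).sub (hv₃an.mul hw₂an)
  have hDrep : ∀ᶠ z in 𝓝[≠] z₀, wronskian3 F₁ F₂ F₃ z
      = (z - z₀) ^ (b + c - 3) * (fun z => v₂ z * w₃ z - v₃ z * w₂ z) z := by
    filter_upwards [hDev, hv₂, hw₂, hv₃, hw₃, self_mem_nhdsWithin] with z h0 h1 h2 h3 h4 hz
    have hne : z - z₀ ≠ 0 := sub_ne_zero.mpr hz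
    rw [h0, h1, h2, h3, h4]
    have e1 : (z - z₀) ^ (b - 1) * (z - z₀) ^ (c - 1 - 1) = (z - z₀) ^ (b + c - 3) := by
      rw [← zpow_add₀ hne]; congr 1; ring
    have e2 : (z - z₀) ^ (c - 1) * (z - z₀) ^ (b - 1 - 1) = (z - z₀) ^ (b + c - 3) := by
      rw [← zpow_add₀ hne]; congr 1; ring
    linear_combination (v₂ z * w₃ z) * e1 - (v₃ z * w₂ z) * e2
  have hDm : MeromorphicAt (wronskian3 F₁ F₂ F₃) z₀ := rep_merom hEan hDrep
  have hDord : ((b + c - 3 : ℤ) : WithTop ℤ) ≤ meromorphicOrderAt (wronskian3 F₁ F₂ F₃) z₀ := rep_order_ge hEan hDrep hDm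
  have hF1m : MeromorphicAt F₁ z₀ := rep_merom hU1 hF1
  have hF2m : MeromorphicAt F₂ z₀ := rep_merom hU2 hF2
  have hF3m : MeromorphicAt F₃ z₀ := rep_merom hU3 hF3
  have mo1 : meroOrd F₁ z₀ = a := by
    unfold meroOrd
    rw [dif_pos hF1m, rep_order_eq hU1 hU10 hF1 hF1m]; rfl
  have mo2 : meroOrd F₂ z₀ = b := by
    unfold meroOrd
    rw [dif_pos hF2m, rep_order_eq hU2 hU20 hF2 hF2m]; rfl
  have mo3 : meroOrd F₃ z₀ = c := by
    unfold meroOrd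
    rw [dif_pos hF3m, rep_order_eq hU3 hU30 hF3 hF3m]; rfl
  have z1 : (zeroMult F₁ z₀ : ℤ) = 0 := by
    unfold zeroMult; rw [mo1]; simp [Int.toNat_of_nonpos ha0.le]
  have z2 : (zeroMult F₂ z₀ : ℤ) = 0 := by
    unfold zeroMult; rw [mo2]; simp [Int.toNat_of_nonpos hb0.le]
  have z3 : (zeroMult F₃ z₀ : ℤ) = 0 := by
    unfold zeroMult; rw [mo3]; simp [Int.toNat_of_nonpos hc0.le]
  have p1 : (poleMult F₁ z₀ : ℤ) = -a := by
    unfold poleMult; rw [mo1]; exact Int.toNat_of_nonneg (by omega)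
  have p2 : (poleMult F₂ z₀ : ℤ) = -b := by
    unfold poleMult; rw [mo2]; exact Int.toNat_of_nonneg (by omega)
  have p3 : (poleMult F₃ z₀ : ℤ) = -c := by
    unfold poleMult; rw [mo3]; exact Int.toNat_of_nonneg (by omega)
  have pD : (poleMult (wronskian3 F₁ F₂ F₃) z₀ : ℤ) ≤ 3 - b - c := by
    unfold poleMult
    rcases eq_or_ne (meromorphicOrderAt (wronskian3 F₁ F₂ F₃) z₀) ⊤ with htop | hnetop
    · have hmo : meroOrd (wronskian3 F₁ F₂ F₃) z₀ = 0 := by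
        unfold meroOrd; rw [dif_pos hDm, htop]; rfl
      rw [hmo]; simp; omega
    · obtain ⟨d, hd⟩ := WithTop.ne_top_iff_exists.mp hnetop
      have hmo : meroOrd (wronskian3 F₁ F₂ F₃) z₀ = d := by
        unfold meroOrd; rw [dif_pos hDm, ← hd]; rfl
      have hdge : b + c - 3 ≤ d := by
        rw [← hd] at hDord; exact_mod_cast hDord
      rw [hmo, Int.toNat_eq_max]
      exact max_le (by omega) (by omega)
  have zD : (0 : ℤ) ≤ (zeroMult (wronskian3 F₁ F₂ F₃) z₀ : ℤ) := Int.natCast_nonneg _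
  unfold nevanA
  rw [z1, z2, z3, p1, p2, p3, hrb, hrc]
  linarith [pD, zD]
end
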